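/- Let K be a positive trace-one operator on H, T the closed span of B K̄ for B = B(T^⊥) ⊕ N with N a maximal abelian subalgebra of B(T) containing P_T. Then B = B(T^⊥) ⊕ N is maximal among unital C*-subalgebras C of B(H) satisfying Tr(K[A,B]*[A,B]) = 0 for all A, B ∈ C: any such C containing B equals B. -/

import Mathlib

/-- The normal state `T ↦ Tr(KT)` associated to `K = ∑ₙ λₙ |eₙ⟩⟨eₙ|`. -/
noncomputable def trState {H : Type*} [NormedAddCommGroup H] [InnerProductSpace ℂ H]
    (e : ℕ → H) (lam : ℕ → ℝ) (T : H →L[ℂ] H) : ℂ :=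
  ∑' n, (lam n : ℂ) * (inner ℂ (e n) (T (e n)) : ℂ)

/-- The algebra `B(T^⊥) ⊕ N`: all bounded operators A on H such that T reduces A and
the compression of A to T belongs to N. -/
noncomputable def dsAlg {H : Type*} [NormedAddCommGroup H] [InnerProductSpace ℂ H]
    [CompleteSpace H] (T : Submodule ℂ H) [CompleteSpace T]
    (N : Set (↥T →L[ℂ] ↥T)) : Set (H →L[ℂ] H) :=
  {a | (∀ x ∈ T, a x ∈ T) ∧ (∀ x ∈ T, ContinuousLinearMap.adjoint a x ∈ T) ∧
    (T.orthogonalProjectionOnto.comp (a.comp T.subtypeL)) ∈ N}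

lemma vanish_on_rangeK {H : Type*} [NormedAddCommGroup H] [InnerProductSpace ℂ H]
    [CompleteSpace H]
    (K : H →L[ℂ] H) (e : ℕ → H) (he : Orthonormal ℂ e)
    (lam : ℕ → ℝ) (hlam : ∀ n, 0 ≤ lam n) (hsum : ∑' n, lam n = 1)
    (hK : ∀ y : H, K y = ∑' n, lam n • ((inner ℂ (e n) y : ℂ) • e n))
    (M : H →L[ℂ] H) (h0 : trState e lam (star M * M) = 0) :
    ∀ x ∈ closure (Set.range K), M x = 0 := by
  have hlamsum : Summable lam := by
    by_contra hc
    rw [tsum_eq_zero_of_not_summable hc] at hsum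
    norm_num at hsum
  have hterm : ∀ n, (lam n : ℂ) * (inner ℂ (e n) ((star M * M) (e n)) : ℂ)
      = ((lam n * ‖M (e n)‖ ^ 2 : ℝ) : ℂ) := by
    intro n
    rw [ContinuousLinearMap.mul_apply, ContinuousLinearMap.star_eq_adjoint,
      ContinuousLinearMap.adjoint_inner_right, inner_self_eq_norm_sq_to_K]
    rw [Complex.ofReal_mul, Complex.ofReal_pow]; rfl
  have hnn : ∀ n, 0 ≤ lam n * ‖M (e n)‖ ^ 2 :=
    fun n => mul_nonneg (hlam n) (sq_nonneg _)
  have hsummable : Summable (fun n => lam n * ‖M (e n)‖ ^ 2) := by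
    apply Summable.of_nonneg_of_le hnn (fun n => ?_) (hlamsum.mul_right (‖M‖ ^ 2))
    have h1 : ‖M (e n)‖ ≤ ‖M‖ * ‖e n‖ := M.le_opNorm _
    rw [he.1 n, mul_one] at h1
    exact mul_le_mul_of_nonneg_left (pow_le_pow_left₀ (norm_nonneg _) h1 2) (hlam n)
  have h0' : ∑' n, (lam n * ‖M (e n)‖ ^ 2 : ℝ) = 0 := by
    have h2 : ((∑' n, (lam n * ‖M (e n)‖ ^ 2 : ℝ) : ℝ) : ℂ) = 0 := by
      rw [Complex.ofReal_tsum]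
      rw [trState] at h0
      rw [← h0]
      exact tsum_congr fun n => (hterm n).symm
    exact_mod_cast h2
  have hzero : ∀ n, lam n * ‖M (e n)‖ ^ 2 = 0 := by
    intro n
    by_contra hne
    have hpos : 0 < lam n * ‖M (e n)‖ ^ 2 := lt_of_le_of_ne (hnn n) (Ne.symm hne)
    have := Summable.tsum_pos hsummable hnn n hpos
    rw [h0'] at this
    exact lt_irrefl 0 this
  have hMe : ∀ n, lam n ≠ 0 → M (e n) = 0 := by
    intro n hn
    rcases mul_eq_zero.mp (hzero n) with h | h
    · exact absurd h hn
    · rwa [sq_eq_zero_iff, norm_eq_zero] at h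
  have hMK : ∀ y : H, M (K y) = 0 := by
    intro y
    rw [hK y]
    have hsummable2 : Summable (fun n => lam n • ((inner ℂ (e n) y : ℂ) • e n)) := by
      apply Summable.of_norm
      apply Summable.of_nonneg_of_le (fun n => norm_nonneg _) (fun n => ?_)
        (hlamsum.mul_right ‖y‖)
      have h1 : ‖(inner ℂ (e n) y : ℂ)‖ ≤ ‖e n‖ * ‖y‖ := norm_inner_le_norm _ _
      rw [he.1 n, one_mul] at h1
      calc ‖lam n • ((inner ℂ (e n) y : ℂ) • e n)‖
          = lam n * (‖(inner ℂ (e n) y : ℂ)‖ * ‖e n‖) := by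
            rw [norm_smul, norm_smul, Real.norm_eq_abs, abs_of_nonneg (hlam n)]
        _ ≤ lam n * ‖y‖ := by
            rw [he.1 n, mul_one]
            exact mul_le_mul_of_nonneg_left h1 (hlam n)
    rw [M.map_tsum hsummable2]
    have : ∀ n, M (lam n • ((inner ℂ (e n) y : ℂ) • e n)) = 0 := by
      intro n
      rcases eq_or_ne (lam n) 0 with h | h
      · simp [h]
      · simp [hMe n h]
    rw [tsum_congr this, tsum_zero]
  intro x hx
  have hsub : Set.range K ⊆ (M ⁻¹' {0} : Set H) := by
    rintro _ ⟨y, rfl⟩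
    exact hMK y
  have hcl : IsClosed (M ⁻¹' {0} : Set H) := isClosed_singleton.preimage M.continuous
  exact closure_minimal hsub hcl hx

/-- Let K = ∑ₙ λₙ|eₙ⟩⟨eₙ| be a positive trace-one operator, T a closed subspace with
T = [B K̄] for B = B(T^⊥) ⊕ N, where N is a maximal abelian (unital) subalgebra of B(T).
Then B is maximal among unital C*-subalgebras C of B(H) that are beable for K
(Tr(K[A,B]*[A,B]) = 0 for all A, B ∈ C): any such C containing B equals B. -/
theorem stmt_11 {H : Type*} [NormedAddCommGroup H] [InnerProductSpace ℂ H] [CompleteSpace H]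
    (K : H →L[ℂ] H) (e : ℕ → H) (he : Orthonormal ℂ e)
    (lam : ℕ → ℝ) (hlam : ∀ n, 0 ≤ lam n) (hsum : ∑' n, lam n = 1)
    (hK : ∀ y : H, K y = ∑' n, lam n • ((inner ℂ (e n) y : ℂ) • e n))
    (T : Submodule ℂ H) [CompleteSpace T]
    (hTclosed : IsClosed (T : Set H))
    (hKT : closure (Set.range K) ⊆ (T : Set H))
    (N : StarSubalgebra ℂ (↥T →L[ℂ] ↥T))
    (hNab : ∀ a ∈ N, ∀ b ∈ N, a * b = b * a)
    (hNmax : ∀ X : ↥T →L[ℂ] ↥T, (∀ n ∈ N, X * n = n * X) → X ∈ N)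
    (hT : T = (Submodule.span ℂ
      {y | ∃ a ∈ dsAlg T (N : Set (↥T →L[ℂ] ↥T)), ∃ x ∈ closure (Set.range K), a x = y}
        ).topologicalClosure)
    (C : StarSubalgebra ℂ (H →L[ℂ] H))
    (hBC : dsAlg T (N : Set (↥T →L[ℂ] ↥T)) ⊆ (C : Set (H →L[ℂ] H)))
    (hCbeable : ∀ a ∈ C, ∀ b ∈ C,
        trState e lam (star (a * b - b * a) * (a * b - b * a)) = 0) :
    (C : Set (H →L[ℂ] H)) = dsAlg T (N : Set (↥T →L[ℂ] ↥T)) := by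
  -- commutators of elements of C vanish on the closure of the range of K
  have hvan : ∀ a ∈ C, ∀ b ∈ C, ∀ x ∈ closure (Set.range K), (a * b - b * a) x = 0 :=
    fun a ha b hb =>
      vanish_on_rangeK K e he lam hlam hsum hK _ (hCbeable a ha b hb)
  -- commutators of elements of C vanish on all of T
  have hvanT : ∀ a ∈ C, ∀ b ∈ C, ∀ x ∈ T, a (b x) = b (a x) := by
    intro a ha b hb
    have hker : ∀ x ∈ T, (a * b - b * a) x = 0 := by
      intro x hx
      rw [hT] at hx
      have hSle : {y | ∃ a' ∈ dsAlg T (N : Set (↥T →L[ℂ] ↥T)),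
          ∃ x' ∈ closure (Set.range K), a' x' = y}
          ⊆ (LinearMap.ker ((a * b - b * a : H →L[ℂ] H) : H →ₗ[ℂ] H) : Set H) := by
        rintro y ⟨b', hb', x', hx', rfl⟩
        simp only [SetLike.mem_coe, LinearMap.mem_ker]
        have hb'C : b' ∈ C := hBC hb'
        have h1 := hvan a ha (b * b') (mul_mem hb hb'C) x' hx'
        have h2 := hvan a ha b' hb'C x' hx'
        simp only [ContinuousLinearMap.coe_coe, ContinuousLinearMap.sub_apply, ContinuousLinearMap.mul_apply,
          sub_eq_zero] at h1 h2 ⊢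
        show a (b (b' x')) = b (a (b' x'))
        rw [h2, h1]
      have hle := Submodule.topologicalClosure_minimal _ (Submodule.span_le.mpr hSle) (ContinuousLinearMap.isClosed_ker _)
      exact hle hx
    intro x hx
    have h := hker x hx
    simp only [ContinuousLinearMap.sub_apply, ContinuousLinearMap.mul_apply,
      sub_eq_zero] at h
    exact h
  -- the projection onto T belongs to the algebra B
  set P : H →L[ℂ] H := T.subtypeL.comp T.orthogonalProjectionOnto with hPdef
  have hPx : ∀ x ∈ T, P x = x := fun x hx => Submodule.starProjection_eq_self_iff.mpr hx
  have hPmemT : ∀ x : H, P x ∈ T := fun x => (T.orthogonalProjectionOnto x).2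
  have hPadj : ContinuousLinearMap.adjoint P = P := by
    rw [← ContinuousLinearMap.star_eq_adjoint]
    exact (isSelfAdjoint_starProjection T)
  have hPB : P ∈ dsAlg T (N : Set (↥T →L[ℂ] ↥T)) := by
    refine ⟨fun x _ => hPmemT x, fun x hx => ?_, ?_⟩
    · rw [hPadj]; exact hPmemT x
    · have : T.orthogonalProjectionOnto.comp (P.comp T.subtypeL) = 1 := by
        ext u
        simp [hPdef, Submodule.orthogonalProjectionOnto_mem_subspace_eq_self]
      rw [this]
      exact N.one_mem'
  have hPC : P ∈ C := hBC hPB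
  -- extension of elements of N to H belongs to B
  have hextB : ∀ n : ↥T →L[ℂ] ↥T, n ∈ N →
      T.subtypeL.comp (n.comp T.orthogonalProjectionOnto) ∈
        dsAlg T (N : Set (↥T →L[ℂ] ↥T)) := by
    intro n hn
    refine ⟨fun x _ => ?_, fun x hx => ?_, ?_⟩
    · exact (n (T.orthogonalProjectionOnto x)).2
    · rw [ContinuousLinearMap.adjoint_comp, ContinuousLinearMap.adjoint_comp,
        Submodule.adjoint_subtypeL, Submodule.adjoint_orthogonalProjection]
      exact ((ContinuousLinearMap.adjoint n) (T.orthogonalProjectionOnto x)).2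
    · have : T.orthogonalProjectionOnto.comp
          ((T.subtypeL.comp (n.comp T.orthogonalProjectionOnto)).comp T.subtypeL) = n := by
        ext u
        simp [Submodule.orthogonalProjectionOnto_mem_subspace_eq_self]
      rw [this]
      exact hn
  -- conclude
  apply Set.Subset.antisymm _ hBC
  intro a ha
  have hmapT : ∀ x ∈ T, a x ∈ T := by
    intro x hx
    have h := hvanT a ha P hPC x hx
    rw [hPx x hx] at h
    rw [h]
    exact hPmemT _
  refine ⟨hmapT, ?_, ?_⟩
  · intro x hx
    have hstar : star a ∈ C := star_mem ha
    have h := hvanT (star a) hstar P hPC x hx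
    rw [hPx x hx] at h
    rw [← ContinuousLinearMap.star_eq_adjoint, h]
    exact hPmemT _
  · apply hNmax
    intro n hn
    have hbC : T.subtypeL.comp (n.comp T.orthogonalProjectionOnto) ∈ C := hBC (hextB n hn)
    ext u
    have h := hvanT a ha _ hbC (↑u) u.2
    simp only [ContinuousLinearMap.comp_apply, Submodule.subtypeL_apply,
      Submodule.orthogonalProjectionOnto_mem_subspace_eq_self] at h
    -- h : a ↑(n u) = ↑(n (orthogonalProjection T (a ↑u)))
    simp only [ContinuousLinearMap.mul_apply, ContinuousLinearMap.comp_apply,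
      Submodule.subtypeL_apply]
    rw [h, Submodule.orthogonalProjectionOnto_mem_subspace_eq_self]
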